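/- The orthogonal projection onto the column space of D = [W Z] decomposes as the sum of the two oblique projectors: D (D^T D)^{-1} D^T = E_WZ + E_ZW, where E_WZ = W (W^T P_Z^perp W)^{-1} W^T P_Z^perp and E_ZW = Z (Z^T P_W^perp Z)^{-1} Z^T P_W^perp. -/

import Mathlib

open Matrix

theorem orthogonal_projector_decomposition {N P L : ℕ}
    (W : Matrix (Fin N) (Fin P) ℝ) (Z : Matrix (Fin N) (Fin L) ℝ)
    (hW : Wᵀ * W = 1) (hZ : Zᵀ * Z = 1)
    (hrank : (fromCols W Z).rank = P + L)
    (hD : IsUnit ((fromCols W Z)ᵀ * fromCols W Z))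
    (hYW : IsUnit (Wᵀ * (1 - Z * Zᵀ) * W))
    (hYZ : IsUnit (Zᵀ * (1 - W * Wᵀ) * Z)) :
    fromCols W Z * ((fromCols W Z)ᵀ * fromCols W Z)⁻¹ * (fromCols W Z)ᵀ =
      W * (Wᵀ * (1 - Z * Zᵀ) * W)⁻¹ * Wᵀ * (1 - Z * Zᵀ) +
      Z * (Zᵀ * (1 - W * Wᵀ) * Z)⁻¹ * Zᵀ * (1 - W * Wᵀ) := by
  set C := Wᵀ * Z with hC
  have hCt : Zᵀ * W = Cᵀ := by rw [hC, transpose_mul, transpose_transpose]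
  have hA : Wᵀ * (1 - Z * Zᵀ) * W = 1 - C * Cᵀ := by
    rw [hC]
    simp only [Matrix.mul_sub, Matrix.sub_mul, Matrix.mul_one, hW, transpose_mul,
      transpose_transpose, Matrix.mul_assoc]
  have hB : Zᵀ * (1 - W * Wᵀ) * Z = 1 - Cᵀ * C := by
    rw [hC]
    simp only [Matrix.mul_sub, Matrix.sub_mul, Matrix.mul_one, hZ, transpose_mul,
      transpose_transpose, Matrix.mul_assoc]
  set A := 1 - C * Cᵀ with hAdef
  set B := 1 - Cᵀ * C with hBdef
  rw [hA] at hYW; rw [hB] at hYZ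
  clear_value A B
  have hCB : C * B = A * C := by
    rw [hAdef, hBdef]
    simp only [Matrix.mul_sub, Matrix.sub_mul, Matrix.mul_one, Matrix.one_mul, Matrix.mul_assoc]
  have hCB' : Cᵀ * A = B * Cᵀ := by
    rw [hAdef, hBdef]
    simp only [Matrix.mul_sub, Matrix.sub_mul, Matrix.mul_one, Matrix.one_mul, Matrix.mul_assoc]
  have hAinv : A⁻¹ * A = 1 := Matrix.nonsing_inv_mul _ ((Matrix.isUnit_iff_isUnit_det _).mp hYW)
  have hBinv : B * B⁻¹ = 1 := Matrix.mul_nonsing_inv _ ((Matrix.isUnit_iff_isUnit_det _).mp hYZ)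
  have hAinv' : A * A⁻¹ = 1 := Matrix.mul_nonsing_inv _ ((Matrix.isUnit_iff_isUnit_det _).mp hYW)
  have hBinv' : B⁻¹ * B = 1 := Matrix.nonsing_inv_mul _ ((Matrix.isUnit_iff_isUnit_det _).mp hYZ)
  have hcomm : C * B⁻¹ = A⁻¹ * C := by
    calc C * B⁻¹ = A⁻¹ * (A * C) * B⁻¹ := by rw [← Matrix.mul_assoc, hAinv, Matrix.one_mul]
    _ = A⁻¹ * (C * B) * B⁻¹ := by rw [hCB]
    _ = A⁻¹ * C := by rw [Matrix.mul_assoc A⁻¹, Matrix.mul_assoc, hBinv, Matrix.mul_one]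
  have hcomm' : Cᵀ * A⁻¹ = B⁻¹ * Cᵀ := by
    calc Cᵀ * A⁻¹ = B⁻¹ * (B * Cᵀ) * A⁻¹ := by rw [← Matrix.mul_assoc, hBinv', Matrix.one_mul]
    _ = B⁻¹ * (Cᵀ * A) * A⁻¹ := by rw [hCB']
    _ = B⁻¹ * Cᵀ := by rw [Matrix.mul_assoc B⁻¹, Matrix.mul_assoc, hAinv', Matrix.mul_one]
  set R1 : Matrix (Fin P) (Fin N) ℝ := A⁻¹ * (Wᵀ * (1 - Z * Zᵀ)) with hR1
  set R2 : Matrix (Fin L) (Fin N) ℝ := B⁻¹ * (Zᵀ * (1 - W * Wᵀ)) with hR2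
  have hWP : Wᵀ * (1 - Z * Zᵀ) = Wᵀ - C * Zᵀ := by
    rw [hC]; simp only [Matrix.mul_sub, Matrix.mul_one, Matrix.mul_assoc]
  have hZQ : Zᵀ * (1 - W * Wᵀ) = Zᵀ - Cᵀ * Wᵀ := by
    rw [← hCt]; simp only [Matrix.mul_sub, Matrix.mul_one, Matrix.mul_assoc]
  have hDt : (fromCols W Z)ᵀ = fromRows Wᵀ Zᵀ := transpose_fromCols W Z
  have hDD : (fromCols W Z)ᵀ * fromCols W Z = fromBlocks 1 C Cᵀ 1 := by
    rw [hDt, fromRows_mul_fromCols, hW, hZ, hC, hCt]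
  have e1 : (1 : Matrix (Fin P) (Fin P) ℝ) * R1 + C * R2 = Wᵀ := by
    rw [Matrix.one_mul, hR1, hR2, hWP, hZQ, ← Matrix.mul_assoc C, hcomm]
    calc A⁻¹ * (Wᵀ - C * Zᵀ) + A⁻¹ * C * (Zᵀ - Cᵀ * Wᵀ)
        = A⁻¹ * ((1 - C * Cᵀ) * Wᵀ) := by
          simp only [Matrix.mul_sub, Matrix.sub_mul, Matrix.mul_one, Matrix.one_mul,
            Matrix.mul_assoc]
          abel
      _ = Wᵀ := by rw [← hAdef, ← Matrix.mul_assoc, hAinv, Matrix.one_mul]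
  have e2 : Cᵀ * R1 + (1 : Matrix (Fin L) (Fin L) ℝ) * R2 = Zᵀ := by
    rw [Matrix.one_mul, hR1, hR2, hWP, hZQ, ← Matrix.mul_assoc Cᵀ, hcomm']
    calc B⁻¹ * Cᵀ * (Wᵀ - C * Zᵀ) + B⁻¹ * (Zᵀ - Cᵀ * Wᵀ)
        = B⁻¹ * ((1 - Cᵀ * C) * Zᵀ) := by
          simp only [Matrix.mul_sub, Matrix.sub_mul, Matrix.mul_one, Matrix.one_mul,
            Matrix.mul_assoc]
          abel
      _ = Zᵀ := by rw [← hBdef, ← Matrix.mul_assoc, hBinv', Matrix.one_mul]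
  have key : ((fromCols W Z)ᵀ * fromCols W Z) * fromRows R1 R2 = (fromCols W Z)ᵀ := by
    rw [hDD, hDt, fromBlocks_mul_fromRows, e1, e2]
  have hDDinv : ((fromCols W Z)ᵀ * fromCols W Z)⁻¹ * ((fromCols W Z)ᵀ * fromCols W Z) = 1 :=
    Matrix.nonsing_inv_mul _ ((Matrix.isUnit_iff_isUnit_det _).mp hD)
  have key2 : ((fromCols W Z)ᵀ * fromCols W Z)⁻¹ * (fromCols W Z)ᵀ = fromRows R1 R2 := by
    calc ((fromCols W Z)ᵀ * fromCols W Z)⁻¹ * (fromCols W Z)ᵀ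
        = ((fromCols W Z)ᵀ * fromCols W Z)⁻¹ *
          (((fromCols W Z)ᵀ * fromCols W Z) * fromRows R1 R2) := by rw [key]
      _ = fromRows R1 R2 := by rw [← Matrix.mul_assoc, hDDinv, Matrix.one_mul]
  rw [Matrix.mul_assoc, key2, fromCols_mul_fromRows, hR1, hR2, hA, hB]
  simp only [Matrix.mul_assoc]
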